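/- If G is connected and the unitary connection is nontrivial — i.e. there exists a cycle C in G with e^{iθ_C} ≠ 1, where θ_C = Σ_{e ∈ C} θ_e — then the magnetic Laplacian L has trivial kernel: L f = 0 implies f = 0, so L is positive definite. -/

import Mathlib

open scoped ComplexOrder Matrix

/-!
Common definitions: finite weighted undirected graphs with a unitary connection
(each edge carries a fixed orientation and an angle θ_e, with θ changing sign
under orientation reversal), the magnetic Laplacian, rooted multi-type spanning
forests (MTSFs), the MTSF measure, and the smoothing estimators.
-/

attribute [local instance] Classical.propDecidable

universe u

/-- A finite weighted undirected graph with a unitary connection. Each undirected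
edge is recorded with one fixed orientation as an ordered pair, together with a
positive weight and a connection angle `θ` for that orientation. -/
structure MagGraph (V : Type u) where
  edges : Finset (V × V)
  noLoops : ∀ e ∈ edges, e.1 ≠ e.2
  oneOrient : ∀ e ∈ edges, (e.2, e.1) ∉ edges
  w : V × V → ℝ
  wPos : ∀ e ∈ edges, 0 < w e
  θ : V × V → ℝ

variable {V : Type u}

/-- Symmetrized weight: `wSym u v` is the weight of the edge between `u` and `v`
(in either orientation), and `0` if there is no such edge. -/
noncomputable def MagGraph.wSym (G : MagGraph V) (u v : V) : ℝ :=
  if (u, v) ∈ G.edges then G.w (u, v)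
  else if (v, u) ∈ G.edges then G.w (v, u) else 0

/-- The connection angle from `u` to `v`; it changes sign under orientation
reversal, and is `0` if there is no edge between `u` and `v`. -/
noncomputable def MagGraph.θSym (G : MagGraph V) (u v : V) : ℝ :=
  if (u, v) ∈ G.edges then G.θ (u, v)
  else if (v, u) ∈ G.edges then -G.θ (v, u) else 0

/-- The magnetic Laplacian `L`: `L v v = Σ_{e incident to v} w_e` and
`L v' v = - w_e exp(i θ_{v,v'})` for an edge `e` between `v` and `v'`, `0` otherwise. -/
noncomputable def magLap [Fintype V] [DecidableEq V] (G : MagGraph V) : Matrix V V ℂ :=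
  Matrix.of fun u v =>
    if u = v then (∑ x : V, ((G.wSym u x : ℝ) : ℂ))
    else -((G.wSym u v : ℝ) : ℂ) * Complex.exp (Complex.I * ((G.θSym v u : ℝ) : ℂ))

/-- The spanning subgraph of the vertex set determined by a set of (oriented) edges. -/
def subgraphOf (φE : Finset (V × V)) : SimpleGraph V where
  Adj u v := u ≠ v ∧ ((u, v) ∈ φE ∨ (v, u) ∈ φE)
  symm := ⟨fun u v h => ⟨h.1.symm, h.2.symm⟩⟩
  loopless := ⟨fun v h => h.1 rfl⟩

/-- The vertex set of the connected component of `v` in `H`. -/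
noncomputable def compFinset [Fintype V] (H : SimpleGraph V) (v : V) : Finset V :=
  Finset.univ.filter fun u => H.Reachable v u

/-- The sum of the connection angles along a walk. -/
noncomputable def walkθ (G : MagGraph V) {H : SimpleGraph V} {a b : V} (p : H.Walk a b) : ℝ :=
  (p.darts.map fun d => G.θSym d.toProd.1 d.toProd.2).sum

/-- `ψ_{a→b}`: the product of the connection phases `exp(i θ_e)` along a path from
`a` to `b` in `H` (in a forest component this path is unique); `0` if no path exists. -/
noncomputable def psi (G : MagGraph V) (H : SimpleGraph V) (a b : V) : ℂ :=
  if h : ∃ p : H.Walk a b, p.IsPath then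
    Complex.exp (Complex.I * ((walkθ G h.choose : ℝ) : ℂ))
  else 0

/-- The connected component of `v` in `H` contains no cycle. -/
def compAcyclic (H : SimpleGraph V) (v : V) : Prop :=
  ∀ u : V, H.Reachable v u → ∀ c : H.Walk u u, ¬ c.IsCycle

/-- The connected component of `v` in `H` contains exactly one cycle
(cycles being identified with their edge sets). -/
def uniqueCycleComp [DecidableEq V] (H : SimpleGraph V) (v : V) : Prop :=
  (∃ u : V, H.Reachable v u ∧ ∃ c : H.Walk u u, c.IsCycle) ∧
    ∀ (u u' : V) (c : H.Walk u u) (c' : H.Walk u' u'),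
      H.Reachable v u → H.Reachable v u' → c.IsCycle → c'.IsCycle →
        c.edges.toFinset = c'.edges.toFinset

/-- `(φE, R)` is a rooted multi-type spanning forest of `G`: every connected
component of the spanning subgraph `(V, φE)` is either a tree containing exactly one
root from `R`, or a unicycle (connected with exactly one cycle) containing no root. -/
def IsMTSF [Fintype V] [DecidableEq V] (G : MagGraph V) (φE : Finset (V × V))
    (R : Finset V) : Prop :=
  φE ⊆ G.edges ∧
    ∀ v : V,
      (compAcyclic (subgraphOf φE) v ∧ (compFinset (subgraphOf φE) v ∩ R).card = 1) ∨
      (uniqueCycleComp (subgraphOf φE) v ∧ compFinset (subgraphOf φE) v ∩ R = ∅)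

/-- The edge sets of the cycles of `H`. -/
def cycleSets [DecidableEq V] (H : SimpleGraph V) : Set (Finset (Sym2 V)) :=
  {s | ∃ (u : V) (c : H.Walk u u), c.IsCycle ∧ c.edges.toFinset = s}

/-- The total connection angle `θ_C` of the cycle of `H` with edge set `s`
(well defined up to sign, so that `cos θ_C` is well defined); `0` if there is no such cycle. -/
noncomputable def θofSet [DecidableEq V] (G : MagGraph V) (H : SimpleGraph V)
    (s : Finset (Sym2 V)) : ℝ :=
  if h : ∃ p : (u : V) × H.Walk u u, p.2.IsCycle ∧ p.2.edges.toFinset = s then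
    walkθ G h.choose.2
  else 0

/-- The (unnormalized) MTSF weight
`∏_{r ∈ R} q_r ⬝ ∏_{e ∈ φE} w_e ⬝ ∏_C (2 - 2 cos θ_C)`,
the last product running over the cycles of the subgraph `(V, φE)`. -/
noncomputable def mtsfWeight [Fintype V] [DecidableEq V] (G : MagGraph V) (q : V → ℝ)
    (φE : Finset (V × V)) (R : Finset V) : ℝ :=
  (∏ r ∈ R, q r) * (∏ e ∈ φE, G.w e) *
    ∏ s ∈ (Set.toFinite (cycleSets (subgraphOf φE))).toFinset,
      (2 - 2 * Real.cos (θofSet G (subgraphOf φE) s))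

/-- All rooted multi-type spanning forests of `G`, as pairs (edge set, root set). -/
noncomputable def mtsfs [Fintype V] [DecidableEq V] (G : MagGraph V) :
    Finset (Finset (V × V) × Finset V) :=
  Finset.univ.filter fun p => IsMTSF G p.1 p.2

/-- The normalizing constant of the MTSF measure. -/
noncomputable def mtsfZ [Fintype V] [DecidableEq V] (G : MagGraph V) (q : V → ℝ) : ℝ :=
  ∑ p ∈ mtsfs G, mtsfWeight G q p.1 p.2

/-- The probability of a rooted MTSF under the MTSF measure. -/
noncomputable def mtsfProb [Fintype V] [DecidableEq V] (G : MagGraph V) (q : V → ℝ)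
    (p : Finset (V × V) × Finset V) : ℝ :=
  mtsfWeight G q p.1 p.2 / mtsfZ G q

/-- Expectation of a complex-valued statistic of the random rooted MTSF. -/
noncomputable def mtsfExp [Fintype V] [DecidableEq V] (G : MagGraph V) (q : V → ℝ)
    (X : Finset (V × V) × Finset V → ℂ) : ℂ :=
  ∑ p ∈ mtsfs G, ((mtsfProb G q p : ℝ) : ℂ) * X p

/-- Variance `E|X - E X|²` of a complex-valued statistic of the random rooted MTSF. -/
noncomputable def mtsfVar [Fintype V] [DecidableEq V] (G : MagGraph V) (q : V → ℝ)
    (X : Finset (V × V) × Finset V → ℂ) : ℝ :=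
  ∑ p ∈ mtsfs G, mtsfProb G q p * Complex.normSq (X p - mtsfExp G q X)

/-- The root sets `R` compatible with a given edge set `π` (the fiber of the
conditioning `φ_• = π`). -/
noncomputable def rootSets [Fintype V] [DecidableEq V] (G : MagGraph V)
    (π : Finset (V × V)) : Finset (Finset V) :=
  Finset.univ.filter fun R => IsMTSF G π R

/-- Conditional expectation of a statistic of the roots given the edge set `π`. -/
noncomputable def mtsfCondExp [Fintype V] [DecidableEq V] (G : MagGraph V) (q : V → ℝ)
    (π : Finset (V × V)) (X : Finset V → ℂ) : ℂ :=
  (∑ R ∈ rootSets G π, ((mtsfWeight G q π R : ℝ) : ℂ) * X R) /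
    ((∑ R ∈ rootSets G π, mtsfWeight G q π R : ℝ) : ℂ)

/-- Conditional variance of a statistic of the roots given the edge set `π`. -/
noncomputable def mtsfCondVar [Fintype V] [DecidableEq V] (G : MagGraph V) (q : V → ℝ)
    (π : Finset (V × V)) (X : Finset V → ℂ) : ℝ :=
  (∑ R ∈ rootSets G π, mtsfWeight G q π R * Complex.normSq (X R - mtsfCondExp G q π X)) /
    (∑ R ∈ rootSets G π, mtsfWeight G q π R)

/-- The connected component of `v` in `(V, φE)` is a rooted tree (acyclic and
containing a root). -/
def IsTreePart (φE : Finset (V × V)) (R : Finset V) (v : V) : Prop :=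
  compAcyclic (subgraphOf φE) v ∧ ∃ r ∈ R, (subgraphOf φE).Reachable v r

/-- The root of the connected component of `v` (an arbitrary root reachable
from `v`; in an MTSF whose component at `v` is a tree, it is the unique one). -/
noncomputable def rootOf (φE : Finset (V × V)) (R : Finset V) (v : V) : V :=
  if h : ∃ r, r ∈ R ∧ (subgraphOf φE).Reachable v r then h.choose else v

/-- The estimator `f̃`: propagate the value of `g` at the root of the tree of `v`
along the unique path; `0` on unicycle components. -/
noncomputable def ftil (G : MagGraph V) (φE : Finset (V × V)) (R : Finset V)
    (g : V → ℂ) (v : V) : ℂ :=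
  if IsTreePart φE R v then
    psi G (subgraphOf φE) (rootOf φE R v) v * g (rootOf φE R v)
  else 0

/-- `h(u) = (Σ_{x ∈ T_u} q_x ψ_{x→u} g(x)) / (Σ_{x ∈ T_u} q_x)` where `T_u` is the
component of `u`. -/
noncomputable def hfun [Fintype V] (G : MagGraph V) (q : V → ℝ) (φE : Finset (V × V))
    (g : V → ℂ) (u : V) : ℂ :=
  (∑ x ∈ compFinset (subgraphOf φE) u, ((q x : ℝ) : ℂ) * psi G (subgraphOf φE) x u * g x) /
    (∑ x ∈ compFinset (subgraphOf φE) u, ((q x : ℝ) : ℂ))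

/-- The Rao–Blackwellized estimator `f̄`. -/
noncomputable def fbar [Fintype V] (G : MagGraph V) (q : V → ℝ) (φE : Finset (V × V))
    (R : Finset V) (g : V → ℂ) (v : V) : ℂ :=
  if IsTreePart φE R v then
    psi G (subgraphOf φE) (rootOf φE R v) v * hfun G q φE g (rootOf φE R v)
  else 0

/-- The diagonal matrix `Q` of the parameters `q_v`. -/
noncomputable def Qmat [Fintype V] [DecidableEq V] (q : V → ℝ) : Matrix V V ℂ :=
  Matrix.diagonal fun v => ((q v : ℝ) : ℂ)

/-- The Tikhonov-smoothed signal `f_o = (L + Q)⁻¹ Q g`. -/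
noncomputable def fOpt [Fintype V] [DecidableEq V] (G : MagGraph V) (q : V → ℝ)
    (g : V → ℂ) : V → ℂ :=
  ((magLap G + Qmat q)⁻¹ * Qmat q).mulVec g

section MagAux

variable {V : Type u} (G : MagGraph V)

lemma MagAux.wSym_comm (u v : V) : G.wSym u v = G.wSym v u := by
  unfold MagGraph.wSym
  by_cases h1 : (u, v) ∈ G.edges
  · have h2 : (v, u) ∉ G.edges := G.oneOrient _ h1
    simp [h1, h2]
  · by_cases h2 : (v, u) ∈ G.edges <;> simp [h1, h2]

lemma MagAux.θSym_anti (u v : V) : G.θSym u v = -G.θSym v u := by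
  unfold MagGraph.θSym
  by_cases h1 : (u, v) ∈ G.edges
  · have h2 : (v, u) ∉ G.edges := G.oneOrient _ h1
    simp [h1, h2]
  · by_cases h2 : (v, u) ∈ G.edges <;> simp [h1, h2]

lemma MagAux.wSym_eq (u v : V) : G.wSym u v =
    (if (u, v) ∈ G.edges then G.w (u, v) else 0)
      + (if (v, u) ∈ G.edges then G.w (v, u) else 0) := by
  unfold MagGraph.wSym
  by_cases h1 : (u, v) ∈ G.edges
  · have h2 : (v, u) ∉ G.edges := G.oneOrient _ h1
    simp [h1, h2]
  · simp [h1]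

lemma MagAux.wSym_self (u : V) : G.wSym u u = 0 := by
  have h : (u, u) ∉ G.edges := fun h => G.noLoops _ h rfl
  unfold MagGraph.wSym
  simp [h]

lemma MagAux.θSym_fst_snd {e : V × V} (he : e ∈ G.edges) : G.θSym e.1 e.2 = G.θ e := by
  unfold MagGraph.θSym
  simp [show (e.1, e.2) ∈ G.edges from by simpa using he]

lemma MagAux.θSym_snd_fst {e : V × V} (he : e ∈ G.edges) : G.θSym e.2 e.1 = -G.θ e := by
  have h1 : (e.2, e.1) ∉ G.edges := G.oneOrient _ he
  unfold MagGraph.θSym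
  simp [h1, show (e.1, e.2) ∈ G.edges from by simpa using he]

lemma MagAux.magLap_apply [Fintype V] [DecidableEq V] (u v : V) :
    magLap G u v = (if u = v then ((∑ x : V, G.wSym u x : ℝ) : ℂ) else 0)
      - ((G.wSym u v : ℝ) : ℂ) * Complex.exp (Complex.I * ((G.θSym v u : ℝ) : ℂ)) := by
  unfold magLap
  by_cases h : u = v
  · subst h
    simp [MagAux.wSym_self]
  · simp [h]

lemma MagAux.magLap_isHermitian [Fintype V] [DecidableEq V] : (magLap G).IsHermitian := by
  ext u v
  simp only [Matrix.conjTranspose_apply, MagAux.magLap_apply, RCLike.star_def, map_sub,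
    apply_ite (starRingEnd ℂ), map_zero, map_mul, Complex.conj_ofReal, ← Complex.exp_conj,
    Complex.conj_I]
  by_cases h : u = v
  · subst h
    simp [MagAux.wSym_self]
  · have h' : ¬ v = u := fun hh => h hh.symm
    simp only [h, h', if_false]
    rw [MagAux.wSym_comm G v u, MagAux.θSym_anti G v u]
    push_cast
    ring_nf

lemma MagAux.sum_edge (F : V × V → ℂ) [Fintype V] :
    (∑ u : V, ∑ v : V, if (u, v) ∈ G.edges then F (u, v) else 0)
      = ∑ e ∈ G.edges, F e := by
  rw [show (∑ u : V, ∑ v : V, if (u, v) ∈ G.edges then F (u, v) else 0)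
      = ∑ p : V × V, if p ∈ G.edges then F p else 0 from
    (Fintype.sum_prod_type (f := fun p : V × V => if p ∈ G.edges then F p else 0)).symm]
  exact Fintype.sum_ite_mem G.edges F

lemma MagAux.sum_wSym_mul [Fintype V] (F : V → V → ℂ) :
    (∑ u : V, ∑ v : V, ((G.wSym u v : ℝ) : ℂ) * F u v)
      = ∑ e ∈ G.edges, ((G.w e : ℝ) : ℂ) * (F e.1 e.2 + F e.2 e.1) := by
  have key : ∀ u v : V, ((G.wSym u v : ℝ) : ℂ) * F u v =
      (if (u, v) ∈ G.edges then ((G.w (u, v) : ℝ) : ℂ) * F u v else 0)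
        + (if (v, u) ∈ G.edges then ((G.w (v, u) : ℝ) : ℂ) * F u v else 0) := by
    intro u v
    rw [MagAux.wSym_eq]
    by_cases h1 : (u, v) ∈ G.edges <;> by_cases h2 : (v, u) ∈ G.edges <;>
      simp [h1, h2] <;> push_cast <;> ring
  simp only [key, Finset.sum_add_distrib]
  rw [MagAux.sum_edge G (fun e => ((G.w e : ℝ) : ℂ) * F e.1 e.2)]
  rw [show (∑ u : V, ∑ v : V, if (v, u) ∈ G.edges then ((G.w (v, u) : ℝ) : ℂ) * F u v else 0)
      = ∑ u : V, ∑ v : V, if (u, v) ∈ G.edges then ((G.w (u, v) : ℝ) : ℂ) * F v u else 0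
    from Finset.sum_comm]
  rw [MagAux.sum_edge G (fun e => ((G.w e : ℝ) : ℂ) * F e.2 e.1)]
  rw [← Finset.sum_add_distrib]
  apply Finset.sum_congr rfl
  intro e _
  ring

lemma MagAux.quad [Fintype V] [DecidableEq V] (f : V → ℂ) :
    dotProduct (star f) ((magLap G) *ᵥ f)
      = (((∑ e ∈ G.edges, G.w e *
          Complex.normSq (f e.2 - Complex.exp (Complex.I * ((G.θ e : ℝ) : ℂ)) * f e.1)) : ℝ) : ℂ) := by
  have expand : dotProduct (star f) ((magLap G) *ᵥ f)
      = ∑ u : V, ∑ v : V, (starRingEnd ℂ) (f u) * (magLap G u v * f v) := by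
    simp [dotProduct, Matrix.mulVec, Finset.mul_sum, RCLike.star_def]
  rw [expand]
  simp only [MagAux.magLap_apply, sub_mul, mul_sub]
  simp only [Finset.sum_sub_distrib]
  have hdiag : (∑ u : V, ∑ v : V,
        (starRingEnd ℂ) (f u) * ((if u = v then ((∑ x : V, G.wSym u x : ℝ) : ℂ) else 0) * f v))
      = ∑ u : V, ∑ x : V, ((G.wSym u x : ℝ) : ℂ) * ((starRingEnd ℂ) (f u) * f u) := by
    apply Finset.sum_congr rfl
    intro u _
    rw [Finset.sum_eq_single u]
    · rw [if_pos rfl]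
      push_cast
      rw [Finset.sum_mul, Finset.mul_sum]
      apply Finset.sum_congr rfl
      intro x _
      ring
    · intro v _ hv
      simp [Ne.symm hv]
    · simp
  rw [hdiag, MagAux.sum_wSym_mul G (fun u _ => (starRingEnd ℂ) (f u) * f u)]
  have hoff : (∑ u : V, ∑ v : V, (starRingEnd ℂ) (f u) *
        (((G.wSym u v : ℝ) : ℂ) * Complex.exp (Complex.I * ((G.θSym v u : ℝ) : ℂ)) * f v))
      = ∑ u : V, ∑ v : V, ((G.wSym u v : ℝ) : ℂ) *
        (Complex.exp (Complex.I * ((G.θSym v u : ℝ) : ℂ)) * ((starRingEnd ℂ) (f u) * f v)) := by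
    apply Finset.sum_congr rfl; intro u _; apply Finset.sum_congr rfl; intro v _; ring
  rw [hoff, MagAux.sum_wSym_mul G
    (fun u v => Complex.exp (Complex.I * ((G.θSym v u : ℝ) : ℂ)) * ((starRingEnd ℂ) (f u) * f v))]
  simp only [← Finset.sum_sub_distrib]
  push_cast
  apply Finset.sum_congr rfl
  intro e he
  rw [MagAux.θSym_snd_fst G he, MagAux.θSym_fst_snd G he]
  have hneg : ((-G.θ e : ℝ) : ℂ) = -((G.θ e : ℝ) : ℂ) := by push_cast; ring
  rw [hneg]
  have hneg2 : Complex.I * -((G.θ e : ℝ) : ℂ) = -(Complex.I * ((G.θ e : ℝ) : ℂ)) := by ring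
  rw [hneg2]
  have hconjE : (starRingEnd ℂ) (Complex.exp (Complex.I * ((G.θ e : ℝ) : ℂ)))
      = Complex.exp (-(Complex.I * ((G.θ e : ℝ) : ℂ))) := by
    rw [← Complex.exp_conj]
    congr 1
    rw [map_mul, Complex.conj_I, Complex.conj_ofReal]
    ring
  have hE : Complex.exp (Complex.I * ((G.θ e : ℝ) : ℂ))
      * Complex.exp (-(Complex.I * ((G.θ e : ℝ) : ℂ))) = 1 := by
    rw [← Complex.exp_add]
    simp
  rw [Complex.normSq_eq_conj_mul_self]
  simp only [map_sub, map_mul, hconjE]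
  push_cast
  linear_combination (-(G.w e : ℂ) * (starRingEnd ℂ) (f e.1) * f e.1) * hE

lemma MagAux.adj_rel [Fintype V] [DecidableEq V] (f : V → ℂ)
    (hrel : ∀ e ∈ G.edges, f e.2 = Complex.exp (Complex.I * ((G.θ e : ℝ) : ℂ)) * f e.1) :
    ∀ a b : V, (subgraphOf G.edges).Adj a b →
      f b = Complex.exp (Complex.I * ((G.θSym a b : ℝ) : ℂ)) * f a := by
  intro a b hab
  obtain ⟨hne, hmem⟩ := hab
  by_cases h1 : (a, b) ∈ G.edges
  · have h := hrel (a, b) h1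
    have hθ : G.θSym a b = G.θ (a, b) := MagAux.θSym_fst_snd G h1
    rw [hθ]
    exact h
  · have h2 : (b, a) ∈ G.edges := hmem.resolve_left h1
    have h := hrel (b, a) h2
    have hθ : G.θSym a b = -G.θ (b, a) := MagAux.θSym_snd_fst G h2
    rw [hθ, h, ← mul_assoc, ← Complex.exp_add]
    push_cast
    ring_nf
    simp

lemma MagAux.walk_rel [Fintype V] [DecidableEq V] (f : V → ℂ)
    (adjrel : ∀ a b : V, (subgraphOf G.edges).Adj a b →
      f b = Complex.exp (Complex.I * ((G.θSym a b : ℝ) : ℂ)) * f a) :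
    ∀ (a b : V) (p : (subgraphOf G.edges).Walk a b),
      f b = Complex.exp (Complex.I * ((walkθ G p : ℝ) : ℂ)) * f a := by
  intro a b p
  induction p with
  | nil => simp [walkθ]
  | @cons x y z h p ih =>
    have hw : walkθ G (SimpleGraph.Walk.cons h p) = G.θSym x y + walkθ G p := by
      simp [walkθ]
    rw [ih, adjrel x y h, hw, ← mul_assoc, ← Complex.exp_add]
    push_cast
    ring_nf

lemma MagAux.eq_zero_of_edge_rel [Fintype V] [DecidableEq V]
    (hconn : (subgraphOf G.edges).Connected)
    (hnontriv : ∃ (u : V) (c : (subgraphOf G.edges).Walk u u), c.IsCycle ∧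
      Complex.exp (Complex.I * ((walkθ G c : ℝ) : ℂ)) ≠ 1)
    (f : V → ℂ)
    (hrel : ∀ e ∈ G.edges, f e.2 = Complex.exp (Complex.I * ((G.θ e : ℝ) : ℂ)) * f e.1) :
    f = 0 := by
  have adjrel := MagAux.adj_rel G f hrel
  have wrel := MagAux.walk_rel G f adjrel
  obtain ⟨u, c, _, hne⟩ := hnontriv
  have hu : f u = 0 := by
    have h := wrel u u c
    have : (Complex.exp (Complex.I * ((walkθ G c : ℝ) : ℂ)) - 1) * f u = 0 := by
      rw [sub_mul, one_mul, ← h]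
      ring
    rcases mul_eq_zero.mp this with h' | h'
    · exact absurd (sub_eq_zero.mp h') hne
    · exact h'
  funext v
  obtain ⟨p⟩ := hconn.preconnected u v
  rw [Pi.zero_apply, wrel u v p, hu, mul_zero]

end MagAux

/-- if `G` is connected and the unitary connection is nontrivial
(there is a cycle `C` with `e^{i θ_C} ≠ 1`), then the magnetic Laplacian has a
trivial kernel: `L f = 0 → f = 0`, and `L` is positive definite. -/
theorem magLap_posDef_of_nontrivial_connection {V : Type u} [Fintype V] [DecidableEq V]
    (G : MagGraph V) (hconn : (subgraphOf G.edges).Connected)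
    (hnontriv : ∃ (u : V) (c : (subgraphOf G.edges).Walk u u), c.IsCycle ∧
      Complex.exp (Complex.I * ((walkθ G c : ℝ) : ℂ)) ≠ 1) :
    (∀ f : V → ℂ, (magLap G).mulVec f = 0 → f = 0) ∧ (magLap G).PosDef := by
  have key : ∀ f : V → ℂ,
      (∑ e ∈ G.edges, G.w e *
        Complex.normSq (f e.2 - Complex.exp (Complex.I * ((G.θ e : ℝ) : ℂ)) * f e.1)) = 0 →
      f = 0 := by
    intro f hsum
    have hterm := (Finset.sum_eq_zero_iff_of_nonneg (fun e he =>
      mul_nonneg (G.wPos e he).le (Complex.normSq_nonneg _))).mp hsum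
    refine MagAux.eq_zero_of_edge_rel G hconn hnontriv f ?_
    intro e he
    have h0 := hterm e he
    have hw := (G.wPos e he).ne'
    have hns : Complex.normSq (f e.2 - Complex.exp (Complex.I * ((G.θ e : ℝ) : ℂ)) * f e.1) = 0 :=
      (mul_eq_zero.mp h0).resolve_left hw
    exact sub_eq_zero.mp (Complex.normSq_eq_zero.mp hns)
  have posdef : (magLap G).PosDef := by
    refine Matrix.PosDef.of_dotProduct_mulVec_pos (MagAux.magLap_isHermitian G) fun f hf => ?_
    rw [MagAux.quad G f, Complex.zero_lt_real]
    have hnn : 0 ≤ ∑ e ∈ G.edges, G.w e *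
        Complex.normSq (f e.2 - Complex.exp (Complex.I * ((G.θ e : ℝ) : ℂ)) * f e.1) :=
      Finset.sum_nonneg fun e he => mul_nonneg (G.wPos e he).le (Complex.normSq_nonneg _)
    rcases hnn.lt_or_eq with h | h
    · exact h
    · exact absurd (key f h.symm) hf
  refine ⟨fun f hf => ?_, posdef⟩
  by_contra hf0
  have hlt := posdef.dotProduct_mulVec_pos hf0
  rw [hf] at hlt
  simp at hlt
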